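/- Let φ ∈ Φ and 0 < s < t. If γ_φ^{(s)} := sup_{x≥0} φ(x+s)/(φ(x)+φ(s)) is finite, then γ_φ^{(t)} is finite; indeed γ_φ^{(t)} ≤ (1 + γ_φ^{(s)})^{⌈t/s⌉}. -/
import Mathlib


open Set Filter

/-- `Φ`: convex, strictly increasing bijections of `[0,∞)` (with `φ 0 = 0`). -/
def Phi (φ : ℝ → ℝ) : Prop :=
  ConvexOn ℝ (Ici 0) φ ∧ StrictMonoOn φ (Ici 0) ∧
    Set.BijOn φ (Ici 0) (Ici 0) ∧ φ 0 = 0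

/-- `γ_φ^{(t)} = sup_{x ≥ 0} φ(x+t)/(φ(x)+φ(t))`, valued in `[0,∞]`. -/
noncomputable def gamT (φ : ℝ → ℝ) (t : ℝ) : ENNReal :=
  ⨆ x : Ici (0:ℝ), ENNReal.ofReal (φ (x + t) / (φ x + φ t))

/-- If `0 < s < t` and `γ_φ^{(s)} < ∞` then `γ_φ^{(t)} ≤ (1 + γ_φ^{(s)})^⌈t/s⌉ < ∞`. -/
theorem stmt_8 (φ : ℝ → ℝ) (hφ : Phi φ) (s t : ℝ) (hs : 0 < s) (hst : s < t)
    (hfin : gamT φ s < ⊤) :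
    gamT φ t < ⊤ ∧ gamT φ t ≤ (1 + gamT φ s) ^ (⌈t / s⌉₊ : ℕ) := by
  obtain ⟨hconv, hmono, hbij, h0⟩ := hφ
  have ht : 0 < t := hs.trans hst
  have hpos : ∀ x : ℝ, 0 ≤ x → 0 ≤ φ x := fun x hx => hbij.mapsTo (mem_Ici.mpr hx)
  have hφs : 0 < φ s := by
    have := hmono (mem_Ici.mpr le_rfl) (mem_Ici.mpr hs.le) hs
    rwa [h0] at this
  have hφt : 0 < φ t := by
    have := hmono (mem_Ici.mpr le_rfl) (mem_Ici.mpr ht.le) ht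
    rwa [h0] at this
  have hφst : φ s ≤ φ t := (hmono (mem_Ici.mpr hs.le) (mem_Ici.mpr ht.le) hst).le
  set G : ℝ := (gamT φ s).toReal with hG
  have hG0 : 0 ≤ G := ENNReal.toReal_nonneg
  have key : ∀ x : ℝ, 0 ≤ x → φ (x + s) ≤ G * (φ x + φ s) := by
    intro x hx
    have hd : 0 < φ x + φ s := add_pos_of_nonneg_of_pos (hpos x hx) hφs
    have h1 : ENNReal.ofReal (φ (x + s) / (φ x + φ s)) ≤ gamT φ s :=
      le_iSup (fun y : Ici (0:ℝ) => ENNReal.ofReal (φ (↑y + s) / (φ ↑y + φ s)))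
        (⟨x, mem_Ici.mpr hx⟩ : Ici (0:ℝ))
    have h2 : φ (x + s) / (φ x + φ s) ≤ G := by
      have h3 := ENNReal.toReal_mono hfin.ne h1
      rwa [ENNReal.toReal_ofReal (div_nonneg (hpos _ (by linarith [hs.le])) hd.le)] at h3
    exact (div_le_iff₀ hd).mp h2
  have hG1 : 1 ≤ G := by
    have h4 := key 0 le_rfl
    rw [h0, zero_add] at h4
    nlinarith
  set n : ℕ := ⌈t / s⌉₊ with hn
  have htn : t ≤ (n : ℝ) * s := by
    have h5 : t / s ≤ (n : ℝ) := Nat.le_ceil _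
    calc t = t / s * s := by field_simp
    _ ≤ (n : ℝ) * s := by nlinarith
  have main : ∀ x : ℝ, 0 ≤ x → ∀ k : ℕ, φ (x + k * s) + φ t ≤ (1 + G) ^ k * (φ x + φ t) := by
    intro x hx k
    induction k with
    | zero => simp
    | succ k ih =>
      have hxk : 0 ≤ x + k * s := by positivity
      have h6 : φ (x + (k + 1 : ℕ) * s) ≤ G * (φ (x + k * s) + φ s) := by
        have := key (x + k * s) hxk
        convert this using 2
        push_cast
        ring
      have h7 : 0 ≤ φ (x + k * s) := hpos _ hxk
      have h8 : 0 ≤ (1 + G) ^ k := by positivity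
      calc φ (x + (k + 1 : ℕ) * s) + φ t
          ≤ G * (φ (x + k * s) + φ s) + φ t := by linarith
        _ ≤ (1 + G) * (φ (x + k * s) + φ t) := by nlinarith
        _ ≤ (1 + G) * ((1 + G) ^ k * (φ x + φ t)) := by nlinarith
        _ = (1 + G) ^ (k + 1 : ℕ) * (φ x + φ t) := by ring
  have realbound : ∀ x : ℝ, 0 ≤ x → φ (x + t) / (φ x + φ t) ≤ (1 + G) ^ n := by
    intro x hx
    have hd : 0 < φ x + φ t := add_pos_of_nonneg_of_pos (hpos x hx) hφt
    have h9 : φ (x + t) ≤ φ (x + n * s) := by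
      rcases eq_or_lt_of_le htn with h | h
      · rw [h]
      · exact (hmono (mem_Ici.mpr (by linarith)) (mem_Ici.mpr (by nlinarith)) (by linarith)).le
    have h10 := main x hx n
    rw [div_le_iff₀ hd]
    nlinarith [hφt.le]
  have hofreal : (1 + gamT φ s) ^ n = ENNReal.ofReal ((1 + G) ^ n) := by
    rw [ENNReal.ofReal_pow (by linarith), ENNReal.ofReal_add zero_le_one hG0,
      ENNReal.ofReal_one, hG, ENNReal.ofReal_toReal hfin.ne]
  have hbound : gamT φ t ≤ ENNReal.ofReal ((1 + G) ^ n) := by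
    rw [gamT]
    apply iSup_le
    rintro ⟨x, hx⟩
    exact ENNReal.ofReal_le_ofReal (realbound x hx)
  exact ⟨hbound.trans_lt ENNReal.ofReal_lt_top, hofreal ▸ hbound⟩
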